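/- Fix P ≥ 1 and suppose the sequences (α_k)_{k≥1}, (η_k)_{k≥1} satisfy any one of: (I) α_k = δ^k and η_k = ρ with δ > 2 and ρ > 0; (II) α_k = δ and η_k = ρ^k with δ > 2 and 0 < ρ < 1; (III) α_k = δ^k and η_k = ρ^k with δ > 2 and 0 < ρ < δ. Let (λ_{pk})_{1≤p≤P, k≥1} be mutually independent real random variables with λ_{pk} distributed as GDP(α_k, η_k). Then almost surely, for every p ∈ {1, …, P}, the series ∑_{k=1}^∞ λ_{pk}² converges. -/

import Mathlib

open MeasureTheory ProbabilityTheory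
open Filter Set

/-- Density of the generalized double Pareto distribution GDP(α, η). -/
noncomputable def gdpPdf (α η x : ℝ) : ℝ :=
  (α / (2 * η)) * (1 + |x| / η) ^ (-(α + 1))

/-- The generalized double Pareto distribution GDP(α, η) as a measure on ℝ. -/
noncomputable def gdpMeasure (α η : ℝ) : Measure ℝ :=
  MeasureTheory.volume.withDensity (fun x => ENNReal.ofReal (gdpPdf α η x))

/-- `X` has the GDP(α, η) distribution under `μ`. -/
def HasGDP {Ω : Type*} [MeasurableSpace Ω] (μ : Measure Ω) (X : Ω → ℝ) (α η : ℝ) : Prop :=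
  Measurable X ∧ Measure.map X μ = gdpMeasure α η

lemma gdp_ftc (α η t : ℝ) (hα : 0 < α) (hη : 0 < η) (ht : 0 ≤ t) :
    IntegrableOn (fun x => α / (2 * η) * (1 + x / η) ^ (-α - 1)) (Set.Ioi t) ∧
      ∫ x in Set.Ioi t, α / (2 * η) * (1 + x / η) ^ (-α - 1) =
        (1 / 2) * (1 + t / η) ^ (-α) := by
  set g : ℝ → ℝ := fun x => -(1 / 2) * (1 + x / η) ^ (-α) with hg
  have hderiv : ∀ x ∈ Set.Ici t, HasDerivAt g (α / (2 * η) * (1 + x / η) ^ (-α - 1)) x := by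
    intro x hx
    have hx0 : 0 ≤ x := ht.trans hx
    have hb : 0 < 1 + x / η := by positivity
    have h1 : HasDerivAt (fun x : ℝ => 1 + x / η) (1 / η) x := by
      simpa using ((hasDerivAt_id x).div_const η).const_add 1
    have h2 : HasDerivAt (fun y : ℝ => y ^ (-α)) (-α * (1 + x / η) ^ (-α - 1)) (1 + x / η) :=
      Real.hasDerivAt_rpow_const (Or.inl hb.ne')
    have h3 := (h2.comp x h1).const_mul (-(1 / 2) : ℝ)
    convert h3 using 1
    · rfl
    · rfl
    · rfl
    · ring
  have g'pos : ∀ x ∈ Set.Ioi t, 0 ≤ α / (2 * η) * (1 + x / η) ^ (-α - 1) := by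
    intro x hx
    have hx0 : 0 ≤ x := ht.trans (le_of_lt hx)
    have hb : (0:ℝ) ≤ 1 + x / η := by positivity
    exact mul_nonneg (by positivity) (Real.rpow_nonneg hb _)
  have hlim : Tendsto g atTop (nhds 0) := by
    have l1 : Tendsto (fun x : ℝ => 1 + x / η) atTop atTop :=
      tendsto_atTop_add_const_left _ 1 (tendsto_id.atTop_div_const hη)
    have l2 := (tendsto_rpow_neg_atTop hα).comp l1
    have l3 := l2.const_mul (-(1 / 2) : ℝ)
    have l4 : Tendsto g atTop (nhds (-(1 / 2) * 0)) := l3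
    simpa using l4
  refine ⟨integrableOn_Ioi_deriv_of_nonneg' hderiv g'pos hlim, ?_⟩
  rw [integral_Ioi_of_hasDerivAt_of_nonneg' hderiv g'pos hlim]
  simp only [hg]
  ring

lemma gdp_tail (α η t : ℝ) (hα : 1 ≤ α) (hη : 0 < η) (ht : 0 < t) :
    gdpMeasure α η {x : ℝ | t < |x|} ≤ ENNReal.ofReal (η / (α * t)) := by
  have hα0 : 0 < α := lt_of_lt_of_le one_pos hα
  have hmpdf : Measurable fun x : ℝ => ENNReal.ofReal (gdpPdf α η x) := by
    apply Measurable.ennreal_ofReal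
    have hbpos : ∀ x : ℝ, (0:ℝ) < 1 + |x| / η := fun x => by positivity
    exact (continuous_const.mul ((continuous_const.add (continuous_abs.div_const η)).rpow_const
      fun x => Or.inl (hbpos x).ne')).measurable
  have hset : {x : ℝ | t < |x|} = Set.Iio (-t) ∪ Set.Ioi t := by
    ext x
    simp only [Set.mem_setOf_eq, Set.mem_union, Set.mem_Iio, Set.mem_Ioi, lt_abs, lt_neg]
    tauto
  obtain ⟨hint, hval⟩ := gdp_ftc α η t hα0 hη ht.le
  have hIoi : ∫⁻ x in Set.Ioi t, ENNReal.ofReal (gdpPdf α η x) =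
      ENNReal.ofReal ((1 / 2) * (1 + t / η) ^ (-α)) := by
    have hcongr : ∫⁻ x in Set.Ioi t, ENNReal.ofReal (gdpPdf α η x) =
        ∫⁻ x in Set.Ioi t, ENNReal.ofReal (α / (2 * η) * (1 + x / η) ^ (-α - 1)) := by
      apply setLIntegral_congr_fun measurableSet_Ioi
      intro x hx
      dsimp only
      have hx0 : 0 ≤ x := ht.le.trans (le_of_lt hx)
      have hexp : -(α + 1) = -α - 1 := by ring
      rw [gdpPdf, abs_of_nonneg hx0, hexp]
    rw [hcongr, ← ofReal_integral_eq_lintegral_ofReal hint ?_, hval]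
    · filter_upwards [ae_restrict_mem measurableSet_Ioi] with x hx
      have hx' : t < x := hx
      have hx0 : 0 ≤ x := ht.le.trans (le_of_lt hx')
      have hb : (0:ℝ) ≤ 1 + x / η := by positivity
      exact mul_nonneg (by positivity) (Real.rpow_nonneg hb _)
  have hIio : ∫⁻ x in Set.Iio (-t), ENNReal.ofReal (gdpPdf α η x) =
      ∫⁻ x in Set.Ioi t, ENNReal.ofReal (gdpPdf α η x) := by
    conv_lhs => rw [← Measure.map_neg_eq_self (volume : Measure ℝ)]
    rw [setLIntegral_map measurableSet_Iio hmpdf measurable_neg]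
    have hpre : (Neg.neg ⁻¹' Set.Iio (-t) : Set ℝ) = Set.Ioi t := by
      ext x; simp
    rw [hpre]
    apply lintegral_congr
    intro x
    simp [gdpPdf, abs_neg]
  have happ : gdpMeasure α η {x : ℝ | t < |x|} ≤
      ENNReal.ofReal ((1 / 2) * (1 + t / η) ^ (-α)) +
      ENNReal.ofReal ((1 / 2) * (1 + t / η) ^ (-α)) := by
    rw [gdpMeasure, hset]
    refine le_trans (measure_union_le _ _) ?_
    rw [withDensity_apply _ measurableSet_Iio, withDensity_apply _ measurableSet_Ioi,
      hIio, hIoi]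
  refine happ.trans ?_
  have hb : (0:ℝ) < 1 + t / η := by positivity
  have h0 : (0:ℝ) ≤ (1 / 2) * (1 + t / η) ^ (-α) :=
    mul_nonneg (by norm_num) (Real.rpow_nonneg hb.le _)
  rw [← ENNReal.ofReal_add h0 h0]
  apply ENNReal.ofReal_le_ofReal
  have hsum : (1 / 2) * (1 + t / η) ^ (-α) + (1 / 2) * (1 + t / η) ^ (-α)
      = (1 + t / η) ^ (-α) := by ring
  rw [hsum, Real.rpow_neg hb.le]
  have key : α * t / η ≤ (1 + t / η) ^ α := by
    have hber := one_add_mul_self_le_rpow_one_add (s := t / η) (by linarith [div_pos ht hη]) hα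
    have : α * t / η = α * (t / η) := by ring
    nlinarith [mul_pos hα0 (div_pos ht hη)]
  have hpos : (0:ℝ) < α * t / η := by positivity
  calc ((1 + t / η) ^ α)⁻¹ ≤ (α * t / η)⁻¹ := inv_anti₀ hpos key
    _ = η / (α * t) := by rw [inv_div]
lemma geom_shift_summable (c x : ℝ) (h0 : 0 ≤ x) (h1 : x < 1) :
    Summable (fun k : ℕ => c * x ^ (k + 1)) := by
  have := (summable_geometric_of_lt_one h0 h1).mul_left (c * x)
  refine this.congr fun k => ?_
  rw [pow_succ]
  ring

theorem gdp_rows_square_summable_three_conditions {Ω : Type*} [MeasurableSpace Ω]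
    (μ : Measure Ω) [IsProbabilityMeasure μ] (P : ℕ) (hP : 0 < P) (α η : ℕ → ℝ)
    (hcond :
      (∃ δ ρ : ℝ, 2 < δ ∧ 0 < ρ ∧ ∀ k : ℕ, 1 ≤ k → α k = δ ^ k ∧ η k = ρ) ∨
      (∃ δ ρ : ℝ, 2 < δ ∧ 0 < ρ ∧ ρ < 1 ∧ ∀ k : ℕ, 1 ≤ k → α k = δ ∧ η k = ρ ^ k) ∨
      (∃ δ ρ : ℝ, 2 < δ ∧ 0 < ρ ∧ ρ < δ ∧ ∀ k : ℕ, 1 ≤ k → α k = δ ^ k ∧ η k = ρ ^ k))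
    (Λ : Fin P × ℕ → Ω → ℝ) (hmeas : ∀ pk, Measurable (Λ pk))
    (hindep : ProbabilityTheory.iIndepFun Λ μ)
    (hlaw : ∀ (p : Fin P) (k : ℕ), 1 ≤ k →
      Measure.map (Λ (p, k)) μ = gdpMeasure (α k) (η k)) :
    ∀ᵐ ω ∂μ, ∀ p : Fin P, Summable (fun k : ℕ => (Λ (p, k + 1) ω) ^ 2) := by
  -- extract a uniform rate r
  have hkey : ∃ r : ℝ, 0 < r ∧ r < 1 ∧
      Summable (fun k : ℕ => η (k + 1) / (α (k + 1) * r ^ (k + 1))) ∧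
      ∀ k : ℕ, 1 ≤ k → 1 ≤ α k ∧ 0 < η k := by
    rcases hcond with ⟨δ, ρ, hδ, hρ, h⟩ | ⟨δ, ρ, hδ, hρ, hρ1, h⟩ | ⟨δ, ρ, hδ, hρ, hρδ, h⟩
    · refine ⟨1 / 2, by norm_num, by norm_num, ?_, ?_⟩
      · have hsum := geom_shift_summable ρ (2 / δ) (by positivity) (by
          rw [div_lt_one (by linarith)]; linarith)
        refine hsum.congr fun k => ?_
        rw [(h (k + 1) (by omega)).1, (h (k + 1) (by omega)).2]
        rw [div_pow, div_pow]
        have hδ0 : (0:ℝ) < δ ^ (k + 1) := by positivity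
        field_simp
        simp
      · intro k hk
        rw [(h k hk).1, (h k hk).2]
        exact ⟨one_le_pow₀ (by linarith), hρ⟩
    · refine ⟨(ρ + 1) / 2, by linarith, by linarith, ?_, ?_⟩
      · have hr0 : (0:ℝ) < (ρ + 1) / 2 := by linarith
        have hsum := geom_shift_summable (1 / δ) (ρ / ((ρ + 1) / 2))
          (by positivity) (by rw [div_lt_one hr0]; linarith)
        refine hsum.congr fun k => ?_
        rw [(h (k + 1) (by omega)).1, (h (k + 1) (by omega)).2]
        rw [div_pow]
        have h1 : (0:ℝ) < ((ρ + 1) / 2) ^ (k + 1) := by positivity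
        field_simp
      · intro k hk
        rw [(h k hk).1, (h k hk).2]
        exact ⟨by linarith, by positivity⟩
    · have hρδ1 : ρ / δ < 1 := by rw [div_lt_one (by linarith)]; linarith
      set r : ℝ := (ρ / δ + 1) / 2 with hr
      have hρδ0 : (0:ℝ) < ρ / δ := by positivity
      have hr0 : 0 < r := by rw [hr]; linarith
      have hr1 : r < 1 := by rw [hr]; linarith
      refine ⟨r, hr0, hr1, ?_, ?_⟩
      · have hlt : ρ / (δ * r) < 1 := by
          rw [div_lt_one (by positivity)]
          have : ρ / δ < r := by rw [hr]; linarith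
          calc ρ = δ * (ρ / δ) := by field_simp
            _ < δ * r := by
              apply mul_lt_mul_of_pos_left this (by linarith)
        have hsum := geom_shift_summable 1 (ρ / (δ * r)) (by positivity) hlt
        refine hsum.congr fun k => ?_
        rw [(h (k + 1) (by omega)).1, (h (k + 1) (by omega)).2]
        rw [div_pow, mul_pow]
        have h1 : (0:ℝ) < δ ^ (k + 1) := by positivity
        have h2 : (0:ℝ) < r ^ (k + 1) := by positivity
        field_simp
      · intro k hk
        rw [(h k hk).1, (h k hk).2]
        exact ⟨one_le_pow₀ (by linarith), by positivity⟩
  obtain ⟨r, hr0, hr1, hsum, hαη⟩ := hkey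
  rw [ae_all_iff]
  intro p
  set s : ℕ → Set Ω := fun k => {ω | r ^ (k + 1) < |Λ (p, k + 1) ω|} with hs
  have hμs : ∀ k, μ (s k) ≤ ENNReal.ofReal (η (k + 1) / (α (k + 1) * r ^ (k + 1))) := by
    intro k
    have hmx : MeasurableSet {x : ℝ | r ^ (k + 1) < |x|} :=
      measurableSet_lt measurable_const measurable_id.abs
    have hmap : μ (s k) = Measure.map (Λ (p, k + 1)) μ {x : ℝ | r ^ (k + 1) < |x|} := by
      rw [Measure.map_apply (hmeas _) hmx]
      rfl
    rw [hmap, hlaw p (k + 1) (by omega)]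
    exact gdp_tail _ _ _ (hαη (k + 1) (by omega)).1 (hαη (k + 1) (by omega)).2
      (pow_pos hr0 _)
  have hnn : ∀ k : ℕ, 0 ≤ η (k + 1) / (α (k + 1) * r ^ (k + 1)) := by
    intro k
    have h1 := (hαη (k + 1) (by omega)).1
    have h2 := (hαη (k + 1) (by omega)).2
    have h3 : (0:ℝ) < r ^ (k + 1) := pow_pos hr0 _
    positivity
  have hfin : (∑' k, μ (s k)) ≠ ⊤ := by
    refine ne_top_of_le_ne_top ?_ (ENNReal.tsum_le_tsum hμs)
    rw [← ENNReal.ofReal_tsum_of_nonneg hnn hsum]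
    exact ENNReal.ofReal_ne_top
  filter_upwards [MeasureTheory.ae_eventually_notMem hfin] with ω hω
  have hg : Summable (fun k : ℕ => (r ^ 2) ^ (k + 1)) := by
    simpa using geom_shift_summable 1 (r ^ 2) (sq_nonneg r) (by nlinarith)
  refine summable_of_isBigO_nat hg ?_
  refine Asymptotics.IsBigO.of_bound 1 ?_
  filter_upwards [hω] with k hk
  have hle : |Λ (p, k + 1) ω| ≤ r ^ (k + 1) := by
    by_contra hcon
    exact hk (lt_of_not_ge hcon)
  rw [Real.norm_eq_abs, Real.norm_eq_abs, one_mul]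
  have h1 : |Λ (p, k + 1) ω ^ 2| = |Λ (p, k + 1) ω| ^ 2 := by
    rw [abs_pow]
  have h2 : |Λ (p, k + 1) ω| ^ 2 ≤ (r ^ (k + 1)) ^ 2 := by
    apply pow_le_pow_left₀ (abs_nonneg _) hle
  have h3 : (r ^ (k + 1)) ^ 2 = (r ^ 2) ^ (k + 1) := by
    rw [← pow_mul, ← pow_mul, Nat.mul_comm]
  have h4 : |(r ^ 2) ^ (k + 1)| = (r ^ 2) ^ (k + 1) := by
    rw [abs_of_nonneg (pow_nonneg (sq_nonneg r) _)]
  rw [h1, h4]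
  rw [← h3]
  exact h2
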